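/- Let p be a prime, A an associative ring of characteristic p, and a ∈ A a locally ad-nilpotent element, i.e. for every u ∈ A there exists k with (ad a)^k(u) = 0. If D(b) < p for b ∈ A (meaning (ad a)^{p-1}(b) = 0), then for any derivation δ of A with δ(a) = b one has δ(a^p) = 0; in particular a^p is annihilated by every derivation δ such that (ad a)^{p-1}(δ(a)) = 0. -/

import Mathlib

open Finset

/-- Combinatorial identity in any ring: for commuting `d, y`,
`∑_{i<n} (y+d)^i y^{n-1-i} = ∑_{k<n} C(n,k+1) • d^k y^{n-1-k}`. -/
lemma stmt6_geom {R : Type*} [Ring R] {y d : R} (h : Commute d y) (n : ℕ) :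
    ∑ i ∈ range n, (y + d) ^ i * y ^ (n - 1 - i)
      = ∑ k ∈ range n, (n.choose (k + 1)) • (d ^ k * y ^ (n - 1 - k)) := by
  induction n with
  | zero => simp
  | succ n ih =>
    have hL : ∑ i ∈ range (n + 1), (y + d) ^ i * y ^ (n + 1 - 1 - i)
        = (∑ i ∈ range n, (y + d) ^ i * y ^ (n - 1 - i)) * y + (y + d) ^ n := by
      rw [sum_range_succ, sum_mul]
      congr 1
      · refine sum_congr rfl fun i hi => ?_
        have hi' : i < n := mem_range.mp hi
        have : n + 1 - 1 - i = (n - 1 - i) + 1 := by omega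
        rw [this, pow_succ, mul_assoc]
      · simp
    rw [hL, ih]
    have hx : (y + d) ^ n = ∑ k ∈ range (n + 1), d ^ k * y ^ (n - k) * (n.choose k : R) := by
      rw [add_comm y d, h.add_pow]
    rw [hx]
    have h1 : (∑ k ∈ range n, (n.choose (k + 1)) • (d ^ k * y ^ (n - 1 - k))) * y
        = ∑ k ∈ range (n + 1), (n.choose (k + 1)) • (d ^ k * y ^ (n - k)) := by
      rw [sum_range_succ, Nat.choose_succ_self, zero_smul, add_zero, sum_mul]
      refine sum_congr rfl fun k hk => ?_
      have hk' : k < n := mem_range.mp hk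
      have : n - k = (n - 1 - k) + 1 := by omega
      rw [this, smul_mul_assoc, pow_succ, mul_assoc]
    rw [h1, ← sum_add_distrib]
    refine sum_congr rfl fun k hk => ?_
    have : n + 1 - 1 - k = n - k := by omega
    rw [this, Nat.choose_succ_succ' n k, add_smul, add_comm]
    congr 1
    rw [nsmul_eq_mul, (Nat.cast_commute (n.choose k) (d ^ k * y ^ (n - k))).eq]

/-- Leibniz formula for `δ (a ^ n)`. -/
lemma stmt6_leibniz {A : Type*} [Ring A] (a : A) (δ : A →+ A)
    (hδ : ∀ x y : A, δ (x * y) = δ x * y + x * δ y) (n : ℕ) :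
    δ (a ^ n) = ∑ i ∈ range n, a ^ i * δ a * a ^ (n - 1 - i) := by
  induction n with
  | zero =>
    have h1 := hδ 1 1
    simp only [mul_one, one_mul] at h1
    simpa using (left_eq_add.mp h1)
  | succ n ih =>
    rw [pow_succ, hδ, ih, sum_range_succ, sum_mul]
    simp only [Nat.add_sub_cancel, Nat.sub_self, pow_zero, mul_one]
    congr 1
    refine sum_congr rfl fun i hi => ?_
    have hi' : i < n := mem_range.mp hi
    have : n - i = (n - 1 - i) + 1 := by omega
    rw [this, pow_succ, mul_assoc, mul_assoc]

theorem stmt6 (p : ℕ) [Fact p.Prime] (A : Type*) [Ring A] [CharP A p] (a : A)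
    (hloc : ∀ u : A, ∃ k : ℕ, (fun x => a * x - x * a)^[k] u = 0) :
    (∀ b : A, (fun x => a * x - x * a)^[p - 1] b = 0 →
      ∀ δ : A →+ A, (∀ x y : A, δ (x * y) = δ x * y + x * δ y) → δ a = b →
        δ (a ^ p) = 0) ∧
    (∀ δ : A →+ A, (∀ x y : A, δ (x * y) = δ x * y + x * δ y) →
      (fun x => a * x - x * a)^[p - 1] (δ a) = 0 → δ (a ^ p) = 0) := by
  have hp : p.Prime := Fact.out
  have hmain : ∀ b : A, (fun x => a * x - x * a)^[p - 1] b = 0 →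
      ∀ δ : A →+ A, (∀ x y : A, δ (x * y) = δ x * y + x * δ y) → δ a = b →
        δ (a ^ p) = 0 := by
    intro b hb δ hδ hδa
    -- endomorphisms
    set L : AddMonoid.End A := AddMonoidHom.mulLeft a with hL
    set Rm : AddMonoid.End A := AddMonoidHom.mulRight a with hRm
    set d : AddMonoid.End A := L - Rm with hd
    have hcommLR : Commute L Rm := by
      refine AddMonoidHom.ext fun x => ?_
      show a * (x * a) = (a * x) * a
      rw [mul_assoc]
    have hcomm : Commute d Rm := hcommLR.sub_left (Commute.refl Rm)
    have hLyd : L = Rm + d := by rw [hd]; abel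
    -- pow apply lemmas
    have hLpow : ∀ (i : ℕ) (x : A), (L ^ i) x = a ^ i * x := by
      intro i
      induction i with
      | zero => intro x; simp
      | succ i ih =>
        intro x
        rw [pow_succ']
        show L ((L ^ i) x) = a ^ (i + 1) * x
        rw [ih]
        show a * (a ^ i * x) = a ^ (i + 1) * x
        rw [← mul_assoc, ← pow_succ']
    have hRpow : ∀ (j : ℕ) (x : A), (Rm ^ j) x = x * a ^ j := by
      intro j
      induction j with
      | zero => intro x; simp
      | succ j ih =>
        intro x
        rw [pow_succ']
        show Rm ((Rm ^ j) x) = x * a ^ (j + 1)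
        rw [ih]
        show (x * a ^ j) * a = x * a ^ (j + 1)
        rw [mul_assoc, ← pow_succ]
    have hdpow : ∀ (k : ℕ) (x : A), (d ^ k) x = (fun x => a * x - x * a)^[k] x := by
      intro k
      induction k with
      | zero => intro x; simp
      | succ k ih =>
        intro x
        rw [pow_succ', Function.iterate_succ_apply']
        show d ((d ^ k) x) = _
        rw [ih]
        show L _ - Rm _ = _
        rfl
    -- key identity applied to b
    have key := stmt6_geom hcomm p
    rw [← hLyd] at key
    have keyb := congrArg (fun f : AddMonoid.End A => f b) key
    have lhs_eval : (∑ i ∈ range p, L ^ i * Rm ^ (p - 1 - i)) b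
        = ∑ i ∈ range p, a ^ i * (b * a ^ (p - 1 - i)) := by
      erw [AddMonoidHom.finset_sum_apply]
      refine sum_congr rfl fun i _ => ?_
      show (L ^ i) ((Rm ^ (p - 1 - i)) b) = _
      rw [hLpow, hRpow]
    have rhs_eval : (∑ k ∈ range p, (p.choose (k + 1)) • (d ^ k * Rm ^ (p - 1 - k))) b
        = ∑ k ∈ range p, (p.choose (k + 1)) • ((fun x => a * x - x * a)^[k] b * a ^ (p - 1 - k)) := by
      erw [AddMonoidHom.finset_sum_apply]
      refine sum_congr rfl fun k _ => ?_
      rw [(hcomm.pow_pow k (p - 1 - k)).eq]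
      show (p.choose (k + 1)) • ((Rm ^ (p - 1 - k)) ((d ^ k) b)) = _
      rw [hdpow, hRpow]
    rw [lhs_eval, rhs_eval] at keyb
    -- compute δ (a ^ p)
    rw [stmt6_leibniz a δ hδ p, hδa]
    calc ∑ i ∈ range p, a ^ i * b * a ^ (p - 1 - i)
        = ∑ i ∈ range p, a ^ i * (b * a ^ (p - 1 - i)) := by
          refine sum_congr rfl fun i _ => by rw [mul_assoc]
      _ = ∑ k ∈ range p, (p.choose (k + 1)) • ((fun x => a * x - x * a)^[k] b * a ^ (p - 1 - k)) := keyb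
      _ = 0 := by
          refine sum_eq_zero fun k hk => ?_
          have hk' : k < p := mem_range.mp hk
          rcases eq_or_lt_of_le ((by omega : k ≤ p - 1)) with he | hlt
          · rw [he, hb, zero_mul, smul_zero]
          · have hdvd : p ∣ p.choose (k + 1) :=
              hp.dvd_choose_self (Nat.succ_ne_zero k) (by omega)
            rw [nsmul_eq_mul, (CharP.cast_eq_zero_iff A p _).mpr hdvd, zero_mul]
  exact ⟨hmain, fun δ hδ h => hmain (δ a) h δ hδ rfl⟩
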